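/- Jensen-type inequality ensuring nonnegativity of the sub-block acceptance probability h_{ik} (Eq. (1)): Let T be a finite index set, let (p_t)_{t∈T} and (q_t)_{t∈T} be nonnegative reals, set P := Σ_{t∈T} p_t and Q := Σ_{t∈T} q_t, and assume Q > 0. Then for every integer K ≥ 1, Σ_{t∈T} q_t·(1 − min{p_t/q_t, 1})^K ≥ Q·(1 − min{P/Q, 1})^K, where a summand with q_t = 0 is taken to be 0. -/

import Mathlib

open Finset Set

private lemma aux_convex (K : ℕ) :
    ConvexOn ℝ Set.univ (fun x : ℝ => (1 - min x 1) ^ K) := by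
  have h1 : ConvexOn ℝ (Set.univ : Set ℝ) (fun x : ℝ => max (1 - x) 0) := by
    have := (ConvexOn.sup
      (⟨convex_univ, by intro x _ y _ a b ha hb hab; simp [smul_eq_mul]; ring_nf; nlinarith⟩ :
        ConvexOn ℝ (Set.univ : Set ℝ) (fun x : ℝ => 1 - x))
      (convexOn_const (0 : ℝ) convex_univ))
    simpa [Pi.sup_def] using this
  have h2 := h1.pow (fun x _ => le_max_right _ _) K
  have heq : (fun x : ℝ => (1 - min x 1) ^ K) = ((fun x : ℝ => max (1 - x) 0) ^ K) := by
    funext x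
    have h : 1 - min x 1 = max (1 - x) 0 := by
      rcases le_total x 1 with h | h
      · rw [min_eq_left h, max_eq_left (by linarith)]
      · rw [min_eq_right h, max_eq_right (by linarith)]; ring
    simp [Pi.pow_apply, h]
  rw [heq]
  exact h2

private lemma aux_anti (K : ℕ) :
    Antitone (fun x : ℝ => (1 - min x 1) ^ K) := by
  intro x y hxy
  have h1 : 1 - min y 1 ≤ 1 - min x 1 := by
    have : min x 1 ≤ min y 1 := min_le_min hxy le_rfl
    linarith
  have h0 : (0 : ℝ) ≤ 1 - min y 1 := by simp [min_le_right y 1]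
  exact pow_le_pow_left₀ h0 h1 K

/-- Jensen-type inequality ensuring nonnegativity of the numerator of the
sub-block acceptance probability `h_{ik}` of Eq. (1):
`Σ_t q_t·(1 − min{p_t/q_t, 1})^K ≥ Q·(1 − min{P/Q, 1})^K` where `P = Σ_t p_t`,
`Q = Σ_t q_t > 0` (summands with `q_t = 0` are `0`). -/
theorem hik_numerator_nonneg {T : Type*} [Fintype T] (p q : T → ℝ)
    (hp : ∀ t, 0 ≤ p t) (hq : ∀ t, 0 ≤ q t)
    (hQ : 0 < ∑ t, q t) (K : ℕ) (hK : 1 ≤ K) :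
    (∑ t, q t) * (1 - min ((∑ t, p t) / (∑ t, q t)) 1) ^ K
      ≤ ∑ t, q t * (1 - min (p t / q t) 1) ^ K := by
  set Q := ∑ t, q t with hQdef
  set f : ℝ → ℝ := fun x => (1 - min x 1) ^ K with hf
  have hQne : Q ≠ 0 := ne_of_gt hQ
  -- Jensen with weights q t / Q and points p t / q t
  have hw1 : ∑ t, q t / Q = 1 := by
    rw [← Finset.sum_div, ← hQdef, div_self hQne]
  have hjen := (aux_convex K).map_sum_le (t := Finset.univ)
    (w := fun t => q t / Q) (p := fun t => p t / q t)
    (fun t _ => div_nonneg (hq t) hQ.le) hw1 (fun t _ => Set.mem_univ _)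
  -- the weighted mean
  have hmean : ∑ t, (q t / Q) • (p t / q t) = (∑ t, if q t = 0 then 0 else p t) / Q := by
    rw [Finset.sum_div]
    refine Finset.sum_congr rfl fun t _ => ?_
    by_cases h : q t = 0
    · simp [h]
    · rw [if_neg h, smul_eq_mul]; field_simp
  have hle : (∑ t, if q t = 0 then 0 else p t) / Q ≤ (∑ t, p t) / Q := by
    gcongr with t
    split_ifs with h
    · exact hp t
    · exact le_rfl
  calc Q * f ((∑ t, p t) / Q)
      ≤ Q * f ((∑ t, if q t = 0 then 0 else p t) / Q) :=
        mul_le_mul_of_nonneg_left (aux_anti K hle) hQ.le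
    _ ≤ Q * ∑ t, (q t / Q) * f (p t / q t) := by
        apply mul_le_mul_of_nonneg_left _ hQ.le
        rw [← hmean]; exact hjen
    _ = ∑ t, q t * f (p t / q t) := by
        rw [Finset.mul_sum]
        refine Finset.sum_congr rfl fun t _ => ?_
        field_simp
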